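/- Let K > 0 and let f : [0, ∞) → ℝ be antitone (nonincreasing) with 0 ≤ f ≤ 1 and f(ξ) = 0 for all ξ > K. Set u := ∫_{(0,∞)} f(η) dη and, for ξ ≥ 0, ρ(ξ) := ξ·f(ξ) + ∫_{(ξ,∞)} f(η) dη. Then for every ξ ≥ 0: 0 ≤ ρ(ξ) − u·f(ξ) ≤ 2K · f(ξ)·(1 − f(ξ)). -/

import Mathlib

open MeasureTheory

/-- For a nonincreasing kinetic profile `f` with values in `[0,1]`, vanishing past `K`,
setting `u = ∫_{(0,∞)} f` and `ρ(ξ) = ξ f(ξ) + ∫_{(ξ,∞)} f`, one has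
`0 ≤ ρ(ξ) - u f(ξ) ≤ 2K f(ξ)(1 - f(ξ))` for every `ξ ≥ 0`. -/
theorem stmt9 (K : ℝ) (hK : 0 < K) (f : ℝ → ℝ)
    (hf_anti : AntitoneOn f (Set.Ici 0))
    (hf0 : ∀ ξ, 0 ≤ ξ → 0 ≤ f ξ) (hf1 : ∀ ξ, 0 ≤ ξ → f ξ ≤ 1)
    (hfK : ∀ ξ, K < ξ → f ξ = 0) :
    ∀ ξ : ℝ, 0 ≤ ξ →
      0 ≤ (ξ * f ξ + ∫ η in Set.Ioi ξ, f η) - (∫ η in Set.Ioi (0 : ℝ), f η) * f ξ ∧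
      (ξ * f ξ + ∫ η in Set.Ioi ξ, f η) - (∫ η in Set.Ioi (0 : ℝ), f η) * f ξ
        ≤ 2 * K * (f ξ * (1 - f ξ)) := by
  -- integrability on compact subintervals of [0,∞)
  have hIcc : ∀ a b : ℝ, 0 ≤ a → IntegrableOn f (Set.Icc a b) :=
    fun a b ha => AntitoneOn.integrableOn_isCompact isCompact_Icc
      (hf_anti.mono (fun x hx => le_trans ha hx.1))
  have hIoc : ∀ a b : ℝ, 0 ≤ a → IntegrableOn f (Set.Ioc a b) :=
    fun a b ha => (hIcc a b ha).mono_set Set.Ioc_subset_Icc_self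
  have hzero : ∀ a : ℝ, K ≤ a → (∀ x ∈ Set.Ioi a, f x = 0) :=
    fun a ha x hx => hfK x (lt_of_le_of_lt ha hx)
  have hIoiK : ∀ a : ℝ, K ≤ a → IntegrableOn f (Set.Ioi a) := by
    intro a ha
    exact (integrableOn_zero (ε' := ℝ)).congr_fun
      (fun x hx => (hzero a ha x hx).symm) measurableSet_Ioi
  have hIoi : ∀ a : ℝ, 0 ≤ a → IntegrableOn f (Set.Ioi a) := by
    intro a ha
    rcases le_or_gt K a with h | h
    · exact hIoiK a h
    · rw [← Set.Ioc_union_Ioi_eq_Ioi h.le]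
      exact (hIoc a K ha).union (hIoiK K le_rfl)
  intro ξ hξ
  rcases lt_or_ge K ξ with hKξ | hξK
  · -- ξ > K : everything vanishes
    have hfξ : f ξ = 0 := hfK ξ hKξ
    have hB : (∫ η in Set.Ioi ξ, f η) = 0 :=
      setIntegral_eq_zero_of_forall_eq_zero (hzero ξ hKξ.le)
    rw [hfξ, hB]
    norm_num
  · -- main case ξ ≤ K
    set A := ∫ η in Set.Ioc 0 ξ, f η with hA
    set B := ∫ η in Set.Ioi ξ, f η with hB
    have hsplit : (∫ η in Set.Ioi (0 : ℝ), f η) = A + B := by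
      rw [← Set.Ioc_union_Ioi_eq_Ioi hξ]
      exact setIntegral_union (Set.Ioc_disjoint_Ioi le_rfl) measurableSet_Ioi
        (hIoc 0 ξ le_rfl) (hIoi ξ hξ)
    have hfξ0 : 0 ≤ f ξ := hf0 ξ hξ
    have hfξ1 : f ξ ≤ 1 := hf1 ξ hξ
    -- A ≥ ξ * f ξ
    have hA_lb : ξ * f ξ ≤ A := by
      have : (∫ _η in Set.Ioc (0:ℝ) ξ, f ξ) ≤ A := by
        apply setIntegral_mono_on ((integrableOn_const_iff (by finiteness)).mpr (Or.inr (by simp [hξ])))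
          (hIoc 0 ξ le_rfl) measurableSet_Ioc
        intro x hx
        exact hf_anti hx.1.le hξ hx.2
      simpa [Real.volume_Ioc, ENNReal.toReal_ofReal hξ, max_eq_left hξ] using this
    -- A ≤ ξ
    have hA_ub : A ≤ ξ := by
      have : A ≤ ∫ _η in Set.Ioc (0:ℝ) ξ, (1:ℝ) := by
        apply setIntegral_mono_on (hIoc 0 ξ le_rfl)
          ((integrableOn_const_iff (by finiteness)).mpr (Or.inr (by simp [hξ]))) measurableSet_Ioc
        intro x hx
        exact hf1 x hx.1.le
      simpa [Real.volume_Ioc, ENNReal.toReal_ofReal hξ, max_eq_left hξ] using this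
    -- B ≥ 0
    have hB_lb : 0 ≤ B := by
      apply setIntegral_nonneg measurableSet_Ioi
      intro x hx
      exact hf0 x (le_trans hξ (le_of_lt hx))
    -- B ≤ (K - ξ) * f ξ
    have hB_ub : B ≤ (K - ξ) * f ξ := by
      have hBsplit : B = ∫ η in Set.Ioc ξ K, f η := by
        rw [hB, ← Set.Ioc_union_Ioi_eq_Ioi hξK,
          setIntegral_union (Set.Ioc_disjoint_Ioi le_rfl) measurableSet_Ioi
            (hIoc ξ K hξ) (hIoiK K le_rfl),
          setIntegral_eq_zero_of_forall_eq_zero (hzero K le_rfl), add_zero]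
      have : (∫ η in Set.Ioc ξ K, f η) ≤ ∫ _η in Set.Ioc ξ K, f ξ := by
        apply setIntegral_mono_on (hIoc ξ K hξ)
          ((integrableOn_const_iff (by finiteness)).mpr (Or.inr (by simp))) measurableSet_Ioc
        intro x hx
        exact hf_anti hξ (le_trans hξ hx.1.le) hx.1.le
      rw [hBsplit]
      simpa [Real.volume_Ioc, ENNReal.toReal_ofReal (sub_nonneg.mpr hξK), max_eq_left (sub_nonneg.mpr hξK)] using this
    rw [hsplit]
    constructor
    · nlinarith
    · nlinarith [mul_le_mul_of_nonneg_left hξK (mul_nonneg hfξ0 (sub_nonneg.mpr hfξ1))]
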